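/- Let V be a finite set of size n, let M ⊆ V be nonempty with |M| = k' and 2k' ≤ n, and let k be a real number with k ≥ 2, 2k ≤ 3k', and 2k' ≤ 3k. Form a random subset R ⊆ V by including each element of V independently with probability 1/k. Then the probability that simultaneously |R ∩ M| = 1 and R \ M ≠ ∅ is at least (2/3)·e^{−2}·(1 − e^{−1/3}). -/

import Mathlib

lemma stmt_10_sum_reindex {V : Type*} [Fintype V] [DecidableEq V]
    (M : Finset V) (p q : ℝ) :
    (∑ R : Finset V, if (R ∩ M).card = 1 ∧ (R \ M).Nonempty then
          p ^ R.card * q ^ Rᶜ.card else 0)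
      = (∑ A ∈ M.powerset, if A.card = 1 then p ^ A.card * q ^ (M.card - A.card) else 0)
      * (∑ B ∈ Mᶜ.powerset, if B.Nonempty then p ^ B.card * q ^ (Mᶜ.card - B.card) else 0) := by
  classical
  rw [Finset.sum_mul_sum, ← Finset.sum_product']
  refine Finset.sum_nbij' (fun R => (R ∩ M, R \ M)) (fun AB => AB.1 ∪ AB.2) ?_ ?_ ?_ ?_ ?_
  · intro R _
    simp only [Finset.mem_product, Finset.mem_powerset]
    refine ⟨Finset.inter_subset_right, ?_⟩
    intro x hx
    simp only [Finset.mem_sdiff] at hx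
    simp [Finset.mem_compl, hx.2]
  · intro AB _; exact Finset.mem_univ _
  · intro R _
    ext x
    simp only [Finset.mem_union, Finset.mem_inter, Finset.mem_sdiff]
    tauto
  · intro AB hAB
    simp only [Finset.mem_product, Finset.mem_powerset] at hAB
    obtain ⟨hA, hB⟩ := hAB
    have hBM : ∀ x ∈ AB.2, x ∉ M := by
      intro x hx
      have := hB hx
      simpa [Finset.mem_compl] using this
    have e1 : (AB.1 ∪ AB.2) ∩ M = AB.1 := by
      ext x
      simp only [Finset.mem_inter, Finset.mem_union]
      constructor
      · rintro ⟨h | h, hxM⟩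
        · exact h
        · exact absurd hxM (hBM x h)
      · intro h; exact ⟨Or.inl h, hA h⟩
    have e2 : (AB.1 ∪ AB.2) \ M = AB.2 := by
      ext x
      simp only [Finset.mem_sdiff, Finset.mem_union]
      constructor
      · rintro ⟨h | h, hxM⟩
        · exact absurd (hA h) hxM
        · exact h
      · intro h; exact ⟨Or.inr h, hBM x h⟩
    simp [e1, e2]
  · intro R _
    have hA : R ∩ M ⊆ M := Finset.inter_subset_right
    have hB : R \ M ⊆ Mᶜ := by
      intro x hx
      simp only [Finset.mem_sdiff] at hx
      simp [Finset.mem_compl, hx.2]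
    set a := (R ∩ M).card
    set b := (R \ M).card
    have hab : b + a = R.card := Finset.card_sdiff_add_card_inter R M
    have ha : a ≤ M.card := Finset.card_le_card hA
    have hb : b ≤ Mᶜ.card := Finset.card_le_card hB
    have hRn : R.card + Rᶜ.card = Fintype.card V := Finset.card_add_card_compl R
    have hMn : M.card + Mᶜ.card = Fintype.card V := Finset.card_add_card_compl M
    have hcompl : Rᶜ.card = (M.card - a) + (Mᶜ.card - b) := by omega
    have hcard : R.card = a + b := by omega
    by_cases hcond : a = 1 ∧ (R \ M).Nonempty
    · rw [if_pos hcond, if_pos hcond.1, if_pos hcond.2, hcompl, hcard, pow_add, pow_add]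
      ring
    · rw [if_neg hcond]
      rcases Decidable.not_and_iff_or_not.mp hcond with h | h
      · rw [if_neg h, zero_mul]
      · rw [if_neg h, mul_zero]

lemma stmt_10_sum_singletons {V : Type*} [Fintype V] [DecidableEq V]
    (M : Finset V) (p q : ℝ) :
    (∑ A ∈ M.powerset, if A.card = 1 then p ^ A.card * q ^ (M.card - A.card) else 0)
      = M.card * (p * q ^ (M.card - 1)) := by
  classical
  rw [← Finset.sum_filter, ← Finset.powersetCard_eq_filter]
  rw [Finset.sum_congr rfl (fun A hA => by
      rw [(Finset.mem_powersetCard.mp hA).2, pow_one]),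
    Finset.sum_const, Finset.card_powersetCard, Nat.choose_one_right, nsmul_eq_mul]

lemma stmt_10_sum_nonempty {V : Type*} [Fintype V] [DecidableEq V]
    (M : Finset V) (p q : ℝ) (hpq : p + q = 1) :
    (∑ B ∈ Mᶜ.powerset, if B.Nonempty then p ^ B.card * q ^ (Mᶜ.card - B.card) else 0)
      = 1 - q ^ Mᶜ.card := by
  classical
  have hbin : (∑ B ∈ Mᶜ.powerset, p ^ B.card * q ^ (Mᶜ.card - B.card)) = 1 := by
    have h := Finset.prod_add (fun _ : V => p) (fun _ : V => q) Mᶜ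
    simp only [Finset.prod_const, hpq, one_pow] at h
    calc (∑ B ∈ Mᶜ.powerset, p ^ B.card * q ^ (Mᶜ.card - B.card))
        = ∑ t ∈ Mᶜ.powerset, p ^ t.card * q ^ (Mᶜ \ t).card :=
          Finset.sum_congr rfl (fun B hB => by
            rw [Finset.card_sdiff_of_subset (Finset.mem_powerset.mp hB)])
      _ = 1 := h.symm
  have split : (∑ B ∈ Mᶜ.powerset, if B.Nonempty then p ^ B.card * q ^ (Mᶜ.card - B.card) else 0)
      = (∑ B ∈ Mᶜ.powerset, p ^ B.card * q ^ (Mᶜ.card - B.card))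
        - (∑ B ∈ Mᶜ.powerset, if B = (∅ : Finset V) then p ^ B.card * q ^ (Mᶜ.card - B.card) else 0) := by
    rw [← Finset.sum_sub_distrib]
    refine Finset.sum_congr rfl fun B _ => ?_
    rcases B.eq_empty_or_nonempty with h | h
    · simp [h, Finset.not_nonempty_empty]
    · simp [h, Finset.nonempty_iff_ne_empty.mp h]
  rw [split, hbin, Finset.sum_ite_eq' Mᶜ.powerset (∅ : Finset V)]
  simp

lemma stmt_10_ineq (k : ℝ) (hk : 2 ≤ k) (c m : ℕ) (hc1 : 1 ≤ c) (hm : c ≤ m)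
    (h1 : 2 * k ≤ 3 * (c : ℝ)) (h2 : 2 * (c : ℝ) ≤ 3 * k) :
    (c : ℝ) * (1 / k * (1 - 1 / k) ^ (c - 1)) * (1 - (1 - 1 / k) ^ m)
      ≥ 2 / 3 * Real.exp (-2) * (1 - Real.exp (-(1 / 3))) := by
  have hk0 : (0:ℝ) < k := by linarith
  have hk1 : (0:ℝ) < k - 1 := by linarith
  set q : ℝ := 1 - 1 / k with hq
  have hq0 : (0:ℝ) ≤ q := by
    rw [hq, sub_nonneg, div_le_one hk0]; linarith
  have hqe : Real.exp (-(1/(k-1))) ≤ q := by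
    have hE := Real.add_one_le_exp (1/(k-1))
    have hEpos := Real.exp_pos (1/(k-1))
    have hk0' : k ≠ 0 := ne_of_gt hk0
    have hk1' : k - 1 ≠ 0 := ne_of_gt hk1
    have hqval : q * (1/(k-1) + 1) = 1 := by
      rw [hq]; field_simp; ring
    rw [Real.exp_neg, inv_eq_one_div, div_le_iff₀ hEpos]
    have h6 : q * (1/(k-1) + 1) ≤ q * Real.exp (1/(k-1)) :=
      mul_le_mul_of_nonneg_left hE hq0
    rw [hqval] at h6
    linarith
  have hqle : q ≤ Real.exp (-(1/k)) := by
    have := Real.add_one_le_exp (-(1/k))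
    linarith
  have hA1 : 2/3 ≤ (c : ℝ) * (1/k) := by
    rw [mul_one_div, le_div_iff₀ hk0]; linarith
  have hA2 : Real.exp (-2) ≤ q ^ (c - 1) := by
    calc Real.exp (-2) ≤ Real.exp ((c - 1 : ℕ) * (-(1/(k-1)))) := by
          rw [Real.exp_le_exp]
          have hcast : ((c - 1 : ℕ) : ℝ) = (c : ℝ) - 1 := by
            rw [Nat.cast_sub hc1]; norm_num
          rw [hcast]
          have h3 : (c : ℝ) - 1 ≤ 2 * (k - 1) := by linarith
          have h4 : 0 < 1/(k-1) := by positivity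
          have h5 : (1/(k-1)) * (k-1) = 1 := by field_simp
          nlinarith [mul_nonneg (le_of_lt h4) (by linarith : (0:ℝ) ≤ (c:ℝ) - 1)]
      _ = Real.exp (-(1/(k-1))) ^ (c - 1) := by
          rw [← Real.exp_nat_mul]
      _ ≤ q ^ (c - 1) := pow_le_pow_left₀ (Real.exp_pos _).le hqe _
  have hA3 : q ^ m ≤ Real.exp (-(1/3)) := by
    calc q ^ m ≤ Real.exp (-(1/k)) ^ m := pow_le_pow_left₀ hq0 hqle _
      _ = Real.exp ((m : ℕ) * (-(1/k))) := by rw [← Real.exp_nat_mul]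
      _ ≤ Real.exp (-(1/3)) := by
          rw [Real.exp_le_exp]
          have hmc : (c : ℝ) ≤ (m : ℝ) := by exact_mod_cast hm
          have h5 : (1/k) * k = 1 := by field_simp
          nlinarith
  have hS1 : 2/3 * Real.exp (-2) ≤ (c : ℝ) * (1/k * q ^ (c-1)) := by
    have := mul_le_mul hA1 hA2 (Real.exp_pos _).le (by linarith : (0:ℝ) ≤ (c:ℝ) * (1/k))
    calc 2/3 * Real.exp (-2) ≤ ((c:ℝ) * (1/k)) * q ^ (c-1) := this
      _ = (c : ℝ) * (1/k * q ^ (c-1)) := by ring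
  have hS2 : 1 - Real.exp (-(1/3)) ≤ 1 - q ^ m := by linarith
  have hS2' : (0:ℝ) ≤ 1 - Real.exp (-(1/3)) := by
    have : Real.exp (-(1/3)) ≤ 1 := by
      rw [← Real.exp_zero]; apply Real.exp_le_exp.mpr; norm_num
    linarith
  calc 2/3 * Real.exp (-2) * (1 - Real.exp (-(1/3)))
      ≤ ((c : ℝ) * (1/k * q ^ (c-1))) * (1 - q ^ m) :=
        mul_le_mul hS1 hS2 hS2' (le_trans (by positivity) hS1)
    _ = (c : ℝ) * (1/k * q ^ (c-1)) * (1 - q ^ m) := rfl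

/-- Form a random subset `R` of a finite set `V` by including each element
independently with probability `1/k` (so a fixed set `R` has probability
`(1/k)^|R| · (1 − 1/k)^(|V| − |R|)`). If `M ⊆ V` is nonempty with
`2|M| ≤ |V|` and `k ≥ 2` is a `1.5`-approximation of `|M|`, then the
probability that simultaneously `|R ∩ M| = 1` and `R \ M ≠ ∅` is at least
`(2/3) · e⁻² · (1 − e^(−1/3))`. -/
theorem stmt_10 {V : Type*} [Fintype V] [DecidableEq V]
    (M : Finset V) (hM : M.Nonempty) (hMhalf : 2 * M.card ≤ Fintype.card V)
    (k : ℝ) (hk : 2 ≤ k)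
    (h1 : 2 * k ≤ 3 * (M.card : ℝ)) (h2 : 2 * (M.card : ℝ) ≤ 3 * k) :
    (∑ R : Finset V,
        if (R ∩ M).card = 1 ∧ (R \ M).Nonempty then
          (1 / k) ^ R.card * (1 - 1 / k) ^ Rᶜ.card
        else 0)
      ≥ 2 / 3 * Real.exp (-2) * (1 - Real.exp (-(1 / 3))) := by
  classical
  have hpq : (1/k) + (1 - 1/k) = 1 := by ring
  rw [stmt_10_sum_reindex M (1/k) (1 - 1/k),
    stmt_10_sum_singletons M (1/k) (1 - 1/k),
    stmt_10_sum_nonempty M (1/k) (1 - 1/k) hpq]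
  have hc1 : 1 ≤ M.card := Finset.one_le_card.mpr hM
  have hMn : M.card + Mᶜ.card = Fintype.card V := Finset.card_add_card_compl M
  have hm : M.card ≤ Mᶜ.card := by omega
  exact stmt_10_ineq k hk M.card Mᶜ.card hc1 hm h1 h2
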